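/- Let T be a lexicographically ordered ω₁-tree, L ⊆ 𝓑(T), and U = ⋃L. Assume that for every t ∈ U the set {c ∈ L : t ∈ c} has cardinality at least ℵ₂. If b ∈ L is not a local end point of U, then for every α < ω₁ there exist b₀, b₁ ∈ L, neither of which is a local end point of U, such that b₀ <lex b <lex b₁, Δ(b₀, b) > α, and Δ(b₁, b) > α. -/

import Mathlib

noncomputable section

open Cardinal Set

def omega1 : Ordinal := (Cardinal.aleph 1).ord

def omega2 : Ordinal := (Cardinal.aleph 2).ord

/-- The height of an element `t`: the order type of its set of strict predecessors. -/
def htOf {X : Type} (lt : X → X → Prop)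
    (wo : ∀ t : X, IsWellOrder {s : X // lt s t} fun a b => lt a.1 b.1) (t : X) : Ordinal :=
  @Ordinal.type {s : X // lt s t} (fun a b => lt a.1 b.1) (wo t)

/-- A lexicographically ordered (normal) `ω₁`-tree. -/
structure LexOmega1Tree where
  T : Type
  lt : T → T → Prop
  lt_irrefl : ∀ a : T, ¬ lt a a
  lt_trans : ∀ {a b c : T}, lt a b → lt b c → lt a c
  /-- the strict predecessors of any element are well-ordered -/
  predWO : ∀ t : T, IsWellOrder {s : T // lt s t} fun a b => lt a.1 b.1
  /-- every level is countable -/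
  level_countable : ∀ α : Ordinal, {t : T | htOf lt predWO t = α}.Countable
  /-- levels are nonempty exactly below `ω₁` -/
  level_nonempty : ∀ α : Ordinal, (∃ t : T, htOf lt predWO t = α) ↔ α < omega1
  /-- normality: distinct elements of the same limit height have different predecessors -/
  normal : ∀ s t : T, htOf lt predWO s = htOf lt predWO t →
    Order.IsSuccLimit (htOf lt predWO s) → (∀ u : T, lt u s ↔ lt u t) → s = t
  /-- the lexicographic comparison of distinct elements of equal height -/
  lexlt : T → T → Prop
  lexlt_same : ∀ a b : T, lexlt a b → htOf lt predWO a = htOf lt predWO b ∧ a ≠ b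
  lexlt_tricho : ∀ a b : T, htOf lt predWO a = htOf lt predWO b → a ≠ b →
    lexlt a b ∨ lexlt b a
  lexlt_asymm : ∀ a b : T, lexlt a b → ¬ lexlt b a
  lexlt_trans : ∀ {a b c : T}, lexlt a b → lexlt b c → lexlt a c
  /-- coherence: the lexicographic comparison is decided at the splitting level -/
  lexlt_coh : ∀ a b a' b' : T, lexlt a b → lt a a' → lt b b' →
    htOf lt predWO a' = htOf lt predWO b' → lexlt a' b'

namespace LexOmega1Tree

variable (S : LexOmega1Tree)

def ht : S.T → Ordinal := htOf S.lt S.predWO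

def le (a b : S.T) : Prop := S.lt a b ∨ a = b

/-- a cofinal branch : a downward closed chain meeting every level -/
def IsBranch (b : Set S.T) : Prop :=
  (∀ s t : S.T, t ∈ b → S.lt s t → s ∈ b) ∧
  (∀ s t : S.T, s ∈ b → t ∈ b → s = t ∨ S.lt s t ∨ S.lt t s) ∧
  (∀ α : Ordinal, α < omega1 → ∃ t ∈ b, S.ht t = α)

/-- the set `𝓑(T)` of cofinal branches -/
def Branch : Type := {b : Set S.T // S.IsBranch b}

/-- the lexicographic order on branches (and on arbitrary sets of nodes) -/
def blex (A B : Set S.T) : Prop := ∃ a ∈ A, ∃ b ∈ B, S.lexlt a b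

/-- the order topology on `(𝓑(T), <lex)`, generated by the open rays -/
def branchTop : TopologicalSpace S.Branch :=
  TopologicalSpace.generateFrom
    {s : Set S.Branch | ∃ a : S.Branch, s = {x | S.blex a.1 x.1} ∨ s = {x | S.blex x.1 a.1}}

/-- `b` is a local right end point of the downward closed subtree `W` -/
def IsLocalRightEP (W b : Set S.T) : Prop :=
  ∃ t ∈ b, ∀ s ∈ b, S.ht t ≤ S.ht s →
    ∀ u ∈ W, S.ht u = S.ht s → S.le t u → u = s ∨ S.lexlt u s

/-- `b` is a local left end point of the downward closed subtree `W` -/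
def IsLocalLeftEP (W b : Set S.T) : Prop :=
  ∃ t ∈ b, ∀ s ∈ b, S.ht t ≤ S.ht s →
    ∀ u ∈ W, S.ht u = S.ht s → S.le t u → u = s ∨ S.lexlt s u

def IsLocalEP (W b : Set S.T) : Prop := S.IsLocalRightEP W b ∨ S.IsLocalLeftEP W b

end LexOmega1Tree

section Aux

namespace LexOmega1Tree

variable {S : LexOmega1Tree}

theorem ht_lt_of_lt {s u : S.T} (h : S.lt s u) : S.ht s < S.ht u := by
  haveI := S.predWO u
  haveI := S.predWO s
  refine @PrincipalSeg.ordinal_type_lt {x : S.T // S.lt x s} {x : S.T // S.lt x u}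
    (fun a b => S.lt a.1 b.1) (fun a b => S.lt a.1 b.1) _ _
    ⟨⟨⟨fun x => ⟨x.1, S.lt_trans x.2 h⟩, fun x y hxy => Subtype.ext (congrArg (fun z : {x : S.T // S.lt x u} => z.1) hxy)⟩,
      Iff.rfl⟩, ⟨s, h⟩, ?_⟩
  intro y
  constructor
  · rintro ⟨x, rfl⟩
    exact x.2
  · intro hy
    exact ⟨⟨y.1, hy⟩, Subtype.ext rfl⟩

theorem ht_lt_omega1 (t : S.T) : S.ht t < omega1 :=
  (S.level_nonempty (S.ht t)).mp ⟨t, rfl⟩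

theorem branch_uniq {c : Set S.T} (hc : S.IsBranch c) {s u : S.T}
    (hs : s ∈ c) (hu : u ∈ c) (h : S.ht s = S.ht u) : s = u := by
  rcases hc.2.1 s u hs hu with h1 | h1 | h1
  · exact h1
  · exact absurd h (ne_of_lt (ht_lt_of_lt h1))
  · exact absurd h.symm (ne_of_lt (ht_lt_of_lt h1))

theorem agree {c d : Set S.T} (hc : S.IsBranch c) (hd : S.IsBranch d) {t : S.T}
    (htc : t ∈ c) (htd : t ∈ d) :
    ∀ β ≤ S.ht t, ∀ s ∈ c, ∀ u ∈ d, S.ht s = β → S.ht u = β → s = u := by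
  intro β hβ s hs u hu hsβ huβ
  rcases hc.2.1 s t hs htc with h1 | h1 | h1
  · subst h1
    exact (branch_uniq hd hu htd (huβ.trans hsβ.symm)).symm
  · have hsd : s ∈ d := hd.1 s t htd h1
    exact branch_uniq hd hsd hu (hsβ.trans huβ.symm)
  · exact absurd (ht_lt_of_lt h1) (not_lt.mpr ((le_of_eq hsβ).trans hβ))

theorem ep_unique {R : S.T → S.T → Prop} (hR : ∀ a b, R a b → ¬ R b a)
    {W c c' : Set S.T} (hc : S.IsBranch c) (hc' : S.IsBranch c')
    (hcW : c ⊆ W) (hc'W : c' ⊆ W) {t : S.T} (htc : t ∈ c) (htc' : t ∈ c')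
    (H : ∀ s ∈ c, S.ht t ≤ S.ht s → ∀ u ∈ W, S.ht u = S.ht s → S.le t u → u = s ∨ R u s)
    (H' : ∀ s ∈ c', S.ht t ≤ S.ht s → ∀ u ∈ W, S.ht u = S.ht s → S.le t u → u = s ∨ R u s) :
    c = c' := by
  have key : ∀ s ∈ c, ∀ s' ∈ c', S.ht t ≤ S.ht s → S.ht s = S.ht s' → s = s' := by
    intro s hs s' hs' hts hss
    have lts' : S.le t s' := by
      rcases hc'.2.1 t s' htc' hs' with h | h | h
      · exact Or.inr h
      · exact Or.inl h
      · exact absurd (ht_lt_of_lt h) (not_lt.mpr (hss ▸ hts))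
    have lts : S.le t s := by
      rcases hc.2.1 t s htc hs with h | h | h
      · exact Or.inr h
      · exact Or.inl h
      · exact absurd (ht_lt_of_lt h) (not_lt.mpr hts)
    rcases H s hs hts s' (hc'W hs') hss.symm lts' with h1 | h1
    · exact h1.symm
    rcases H' s' hs' (hss ▸ hts) s (hcW hs) hss lts with h2 | h2
    · exact h2
    · exact absurd h1 (hR _ _ h2)
  ext x
  constructor
  · intro hx
    obtain ⟨y, hy, hyx⟩ := hc'.2.2 (S.ht x) (ht_lt_omega1 x)
    rcases le_or_gt (S.ht t) (S.ht x) with h | h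
    · rw [key x hx y hy h hyx.symm]; exact hy
    · rcases hc.2.1 x t hx htc with h1 | h1 | h1
      · exact absurd (congrArg S.ht h1) (ne_of_lt h)
      · exact hc'.1 x t htc' h1
      · exact absurd (ht_lt_of_lt h1) (not_lt.mpr h.le)
  · intro hx
    obtain ⟨y, hy, hyx⟩ := hc.2.2 (S.ht x) (ht_lt_omega1 x)
    rcases le_or_gt (S.ht t) (S.ht x) with h | h
    · rw [← key y hy x hx (hyx ▸ h : S.ht t ≤ S.ht y) hyx]; exact hy
    · rcases hc'.2.1 x t hx htc' with h1 | h1 | h1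
      · exact absurd (congrArg S.ht h1) (ne_of_lt h)
      · exact hc.1 x t htc h1
      · exact absurd (ht_lt_of_lt h1) (not_lt.mpr h.le)

theorem mk_T_le : #S.T ≤ Cardinal.aleph 1 := by
  classical
  have h0 : (0 : Ordinal) < omega1 := by
    have := Cardinal.ord_lt_ord.mpr (Cardinal.aleph_pos 1)
    rwa [Cardinal.ord_zero] at this
  obtain ⟨t0, -⟩ := (S.level_nonempty 0).mpr h0
  have hsur : ∀ α : Ordinal, ∃ g : ℕ → S.T, ∀ t : S.T, S.ht t = α → ∃ n, g n = t := by
    intro α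
    by_cases hne : ∃ t : S.T, S.ht t = α
    · obtain ⟨f, hf⟩ := (S.level_countable α).exists_eq_range
        ⟨hne.choose, hne.choose_spec⟩
      refine ⟨f, fun t ht => ?_⟩
      have : t ∈ Set.range f := hf ▸ ht
      exact this
    · exact ⟨fun _ => t0, fun t ht => absurd ⟨t, ht⟩ hne⟩
  choose g hg using hsur
  choose n hn using fun t : S.T => hg (S.ht t) t rfl
  have hF : Function.Injective (fun t : S.T =>
      (((Ordinal.ToType.mk (o := omega1)) ⟨S.ht t, ht_lt_omega1 t⟩ : omega1.ToType), n t)) := by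
    intro t t' h
    have h1 : S.ht t = S.ht t' :=
      congrArg Subtype.val (((Ordinal.ToType.mk (o := omega1))).injective (congrArg Prod.fst h))
    have h2 : n t = n t' := congrArg Prod.snd h
    rw [← hn t, ← hn t', h1, h2]
  have hle := Cardinal.mk_le_of_injective hF
  have hcard : #(omega1.ToType × ℕ) = Cardinal.aleph 1 := by
    have h1 : omega1.card = Cardinal.aleph 1 := Cardinal.card_ord _
    rw [Cardinal.mk_prod, Cardinal.mk_toType, Cardinal.mk_nat, Cardinal.lift_id,
      Cardinal.lift_id, h1, Cardinal.aleph_mul_aleph0]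
  rwa [hcard] at hle

theorem exists_nonEP (S : LexOmega1Tree) (L : Set (Set S.T)) (hL : ∀ b ∈ L, S.IsBranch b)
    (hbig : ∀ t ∈ {t : S.T | ∃ c ∈ L, t ∈ c},
      Cardinal.aleph 2 ≤ #{c : Set S.T | c ∈ L ∧ t ∈ c})
    (u : S.T) (hu : u ∈ {t : S.T | ∃ c ∈ L, t ∈ c}) :
    ∃ c, c ∈ L ∧ u ∈ c ∧ ¬ S.IsLocalEP {t : S.T | ∃ c ∈ L, t ∈ c} c := by
  classical
  set U := {t : S.T | ∃ c ∈ L, t ∈ c} with hUdef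
  by_contra hcon
  push_neg at hcon
  set E := {c : Set S.T | c ∈ L ∧ u ∈ c} with hEdef
  have hEP : ∀ c ∈ E, S.IsLocalEP U c := fun c hc => hcon c hc.1 hc.2
  have hsubU : ∀ c ∈ L, c ⊆ U := fun c hc x hx => ⟨c, hc, hx⟩
  have hΦ : Function.Injective (fun c : E =>
      if h : S.IsLocalRightEP U c.1 then ((h.choose, true) : S.T × Bool)
      else (((hEP c.1 c.2).resolve_left h).choose, false)) := by
    intro c c' hcc
    simp only at hcc
    split_ifs at hcc with h1 h2 h2
    · have hw : h1.choose = h2.choose := congrArg Prod.fst hcc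
      have ht1 := h1.choose_spec
      have ht2 := h2.choose_spec
      rw [← hw] at ht2
      exact Subtype.ext (ep_unique S.lexlt_asymm (hL c.1 c.2.1) (hL c'.1 c'.2.1)
        (hsubU c.1 c.2.1) (hsubU c'.1 c'.2.1) ht1.1 ht2.1 ht1.2 ht2.2)
    · exact absurd (congrArg Prod.snd hcc) (by simp)
    · exact absurd (congrArg Prod.snd hcc) (by simp)
    · have hl1 := ((hEP c.1 c.2).resolve_left h1).choose_spec
      have hl2 := ((hEP c'.1 c'.2).resolve_left h2).choose_spec
      have hw : ((hEP c.1 c.2).resolve_left h1).choose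
          = ((hEP c'.1 c'.2).resolve_left h2).choose := congrArg Prod.fst hcc
      rw [← hw] at hl2
      exact Subtype.ext (ep_unique (R := fun a b => S.lexlt b a)
        (fun a b h h' => S.lexlt_asymm a b h' h) (hL c.1 c.2.1) (hL c'.1 c'.2.1)
        (hsubU c.1 c.2.1) (hsubU c'.1 c'.2.1) hl1.1 hl2.1 hl1.2 hl2.2)
  have hle : #E ≤ #(S.T × Bool) := Cardinal.mk_le_of_injective hΦ
  have hlt : #(S.T × Bool) < Cardinal.aleph 2 := by
    have h1 : #(S.T × Bool) ≤ Cardinal.aleph 1 * Cardinal.aleph0 := by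
      rw [Cardinal.mk_prod, Cardinal.lift_id, Cardinal.lift_id]
      exact mul_le_mul' mk_T_le Cardinal.mk_le_aleph0
    rw [Cardinal.aleph_mul_aleph0] at h1
    exact h1.trans_lt (Cardinal.aleph_lt_aleph.mpr one_lt_two)
  exact absurd ((hbig u hu).trans hle) (not_le.mpr hlt)

end LexOmega1Tree
end Aux

/-- Let `L ⊆ 𝓑(T)` and `U = ⋃L`, and assume every `t ∈ U` lies on at least
`ℵ₂`-many branches from `L`. If `b ∈ L` is not a local end point of `U`, then for every
`α < ω₁` there are `b₀, b₁ ∈ L`, neither a local end point of `U`, with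
`b₀ <lex b <lex b₁`, `Δ(b₀,b) > α` and `Δ(b₁,b) > α` (i.e. both agree with `b` on all
levels `≤ α`). -/
theorem stmt12 (S : LexOmega1Tree) (L : Set (Set S.T)) (hL : ∀ b ∈ L, S.IsBranch b)
    (hbig : ∀ t ∈ {t : S.T | ∃ c ∈ L, t ∈ c},
      Cardinal.aleph 2 ≤ #{c : Set S.T | c ∈ L ∧ t ∈ c})
    (b : Set S.T) (hb : b ∈ L)
    (hnl : ¬ S.IsLocalEP {t : S.T | ∃ c ∈ L, t ∈ c} b)
    (α : Ordinal) (hα : α < omega1) :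
    ∃ b₀ ∈ L, ∃ b₁ ∈ L,
      ¬ S.IsLocalEP {t : S.T | ∃ c ∈ L, t ∈ c} b₀ ∧
      ¬ S.IsLocalEP {t : S.T | ∃ c ∈ L, t ∈ c} b₁ ∧
      S.blex b₀ b ∧ S.blex b b₁ ∧
      (∀ β : Ordinal, β ≤ α → ∀ s ∈ b₀, ∀ u ∈ b, S.ht s = β → S.ht u = β → s = u) ∧
      (∀ β : Ordinal, β ≤ α → ∀ s ∈ b₁, ∀ u ∈ b, S.ht s = β → S.ht u = β → s = u) := by
  classical
  have hbB := hL b hb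
  obtain ⟨t, htb, htα⟩ := hbB.2.2 α hα
  have hnr : ¬ S.IsLocalRightEP {t : S.T | ∃ c ∈ L, t ∈ c} b := fun h => hnl (Or.inl h)
  have hnlf : ¬ S.IsLocalLeftEP {t : S.T | ∃ c ∈ L, t ∈ c} b := fun h => hnl (Or.inr h)
  rw [LexOmega1Tree.IsLocalRightEP] at hnr
  rw [LexOmega1Tree.IsLocalLeftEP] at hnlf
  push_neg at hnr hnlf
  obtain ⟨s, hs, hts, u, huU, hus, htu, hune, hnlex⟩ := hnr t htb
  obtain ⟨s', hs', hts', v, hvU, hvs', htv, hvne, hnlex'⟩ := hnlf t htb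
  have hlex1 : S.lexlt s u := (S.lexlt_tricho u s hus hune).resolve_left hnlex
  have hlex0 : S.lexlt v s' := (S.lexlt_tricho v s' hvs' hvne).resolve_right hnlex'
  obtain ⟨b₁, hb₁L, hub₁, hb₁n⟩ := LexOmega1Tree.exists_nonEP S L hL hbig u huU
  obtain ⟨b₀, hb₀L, hvb₀, hb₀n⟩ := LexOmega1Tree.exists_nonEP S L hL hbig v hvU
  have htb₁ : t ∈ b₁ := by
    rcases htu with h | h
    · exact (hL b₁ hb₁L).1 t u hub₁ h
    · rw [h]; exact hub₁
  have htb₀ : t ∈ b₀ := by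
    rcases htv with h | h
    · exact (hL b₀ hb₀L).1 t v hvb₀ h
    · rw [h]; exact hvb₀
  refine ⟨b₀, hb₀L, b₁, hb₁L, hb₀n, hb₁n, ⟨v, hvb₀, s', hs', hlex0⟩,
    ⟨s, hs, u, hub₁, hlex1⟩, ?_, ?_⟩
  · intro β hβ s0 hs0 u0 hu0 h1 h2
    exact LexOmega1Tree.agree (hL b₀ hb₀L) hbB htb₀ htb β (hβ.trans htα.ge) s0 hs0 u0 hu0 h1 h2
  · intro β hβ s0 hs0 u0 hu0 h1 h2
    exact LexOmega1Tree.agree (hL b₁ hb₁L) hbB htb₁ htb β (hβ.trans htα.ge) s0 hs0 u0 hu0 h1 h2
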